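/- Let 0 < λ < 1 and 0 < q ≤ 1. For every real z with |z| < 1, the series Σ_{u=1}^∞ (F_{q,−λ}(u−1) − F_{q,−λ}(u))·z^u converges and its sum equals λz/((1−z)^q + λ). (This is the probability generating function of the discrete Mittag-Leffler waiting time T with P(T > t) = F_{q,−λ}(t).) -/

import Mathlib

/-- Generalized binomial coefficient `ĥ_α(x) = Γ(x+α)/(Γ(α+1)·Γ(x))`. -/
noncomputable def hhat (α x : ℝ) : ℝ :=
  Real.Gamma (x + α) / (Real.Gamma (α + 1) * Real.Gamma x)

/-- Discrete Mittag-Leffler function `F_{q,λ}(t) = Σ_m ĥ_{qm}(t)·λ^m`, with `F_{q,λ}(0) = 1`. -/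
noncomputable def dML (q lam : ℝ) (t : ℕ) : ℝ :=
  if t = 0 then 1 else ∑' m : ℕ, hhat (q * m) (t : ℝ) * lam ^ m

open Filter Finset

lemma hhat_x0 (α : ℝ) : hhat α 0 = 0 := by
  simp [hhat, Real.Gamma_zero]

lemma hhat_one (α : ℝ) (hα : 0 ≤ α) : hhat α 1 = 1 := by
  rw [hhat, Real.Gamma_one, add_comm, mul_one, div_self]
  exact (Real.Gamma_pos_of_pos (by linarith)).ne'

lemma hhat_pos (α : ℝ) (hα : 0 ≤ α) (u : ℕ) : 0 < hhat α ((u:ℝ)+1) := by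
  have h1 : (0:ℝ) < (u:ℝ)+1 := by positivity
  exact div_pos (Real.Gamma_pos_of_pos (by linarith))
    (mul_pos (Real.Gamma_pos_of_pos (by linarith)) (Real.Gamma_pos_of_pos h1))

lemma hhat_succ (α : ℝ) (hα : 0 ≤ α) (u : ℕ) :
    ((u:ℝ)+1) * hhat α ((u:ℝ)+1+1) = ((u:ℝ)+1+α) * hhat α ((u:ℝ)+1) := by
  have h1 : (0:ℝ) < (u:ℝ)+1 := by positivity
  have h2 : (0:ℝ) < (u:ℝ)+1+α := by linarith
  have e1 : (u:ℝ)+1+1 + α = ((u:ℝ)+1+α) + 1 := by ring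
  rw [hhat, hhat, e1, Real.Gamma_add_one h2.ne', Real.Gamma_add_one h1.ne']
  have hg1 : Real.Gamma (α+1) ≠ 0 := (Real.Gamma_pos_of_pos (by linarith)).ne'
  have hg2 : Real.Gamma ((u:ℝ)+1) ≠ 0 := (Real.Gamma_pos_of_pos h1).ne'
  field_simp

lemma hhat_le (α : ℝ) (hα : 0 ≤ α) (u : ℕ) : hhat α ((u:ℝ)+1) ≤ (1+α)^u := by
  induction u with
  | zero => simp [hhat_one α hα]
  | succ n ih =>
      have h1 : (0:ℝ) < (n:ℝ)+1 := by positivity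
      have key := hhat_succ α hα n
      have : hhat α ((n:ℝ)+1+1) = (((n:ℝ)+1+α)/((n:ℝ)+1)) * hhat α ((n:ℝ)+1) := by
        field_simp at key ⊢; linarith [key]
      have hcast : ((n+1 : ℕ) : ℝ) + 1 = (n:ℝ)+1+1 := by push_cast; ring
      rw [hcast, this]
      have hratio : ((n:ℝ)+1+α)/((n:ℝ)+1) ≤ 1+α := by
        rw [div_le_iff₀ h1]; nlinarith
      calc (((n:ℝ)+1+α)/((n:ℝ)+1)) * hhat α ((n:ℝ)+1)
          ≤ (1+α) * (1+α)^n := by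
            apply mul_le_mul hratio ih (hhat_pos α hα n).le (by linarith)
        _ = (1+α)^(n+1) := by ring

lemma ratio_tendsto (α : ℝ) :
    Tendsto (fun u : ℕ => ((u:ℝ)+1+α)/((u:ℝ)+1)) atTop (nhds 1) := by
  have h2 : Tendsto (fun u : ℕ => α/((u:ℝ)+1)) atTop (nhds 0) := by
    have := (tendsto_const_div_atTop_nhds_zero_nat α).comp (tendsto_add_atTop_nat 1)
    apply this.congr
    intro u
    simp [Function.comp]
  have h : Tendsto (fun u : ℕ => 1 + α/((u:ℝ)+1)) atTop (nhds (1+0)) :=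
    Tendsto.const_add _ h2
  rw [add_zero] at h
  apply h.congr
  intro u
  have h1 : ((u:ℝ)+1) ≠ 0 := by positivity
  field_simp

lemma hhat_rec (α : ℝ) (hα : 0 ≤ α) (u : ℕ) :
    hhat α ((u:ℝ)+1+1) = (((u:ℝ)+1+α)/((u:ℝ)+1)) * hhat α ((u:ℝ)+1) := by
  have h1 : (0:ℝ) < (u:ℝ)+1 := by positivity
  have key := hhat_succ α hα u
  field_simp
  linarith [key]

lemma summable_binom (α : ℝ) (hα : 0 ≤ α) {x : ℝ} (hx : |x| < 1) :
    Summable (fun u : ℕ => hhat α ((u:ℝ)+1) * x^u) := by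
  have hr1 : (1+|x|)/2 < 1 := by linarith
  apply summable_of_ratio_norm_eventually_le hr1
  have ht : Tendsto (fun u : ℕ => (((u:ℝ)+1+α)/((u:ℝ)+1)) * |x|) atTop (nhds (1 * |x|)) :=
    (ratio_tendsto α).mul_const _
  rw [one_mul] at ht
  have hev := ht.eventually_le_const (show |x| < (1+|x|)/2 by linarith)
  filter_upwards [hev] with u hu
  have h1 : (0:ℝ) < (u:ℝ)+1 := by positivity
  have hc : ((u+1:ℕ):ℝ) + 1 = ((u:ℝ)+1)+1 := by push_cast; ring
  have heq : ‖hhat α ((((u+1:ℕ)):ℝ)+1) * x^(u+1)‖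
      = ((((u:ℝ)+1+α)/((u:ℝ)+1)) * |x|) * ‖hhat α ((u:ℝ)+1) * x^u‖ := by
    rw [norm_mul, norm_mul, norm_pow, norm_pow, Real.norm_eq_abs, Real.norm_eq_abs,
      Real.norm_eq_abs, hc, hhat_rec α hα u,
      abs_of_pos (hhat_pos α hα u), abs_mul,
      abs_of_pos (div_pos (by linarith) h1), abs_of_pos (hhat_pos α hα u)]
    ring
  rw [heq]
  have hn : (0:ℝ) ≤ ‖hhat α ((u:ℝ)+1) * x^u‖ := norm_nonneg _
  exact mul_le_mul_of_nonneg_right hu hn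

lemma binom_hasSum (α : ℝ) (hα : 0 ≤ α) {x : ℝ} (hx : |x| < 1) :
    HasSum (fun u : ℕ => hhat α ((u:ℝ)+1) * x^u) ((1-x) ^ (-(α+1))) := by
  obtain ⟨hxl, hxr⟩ := abs_lt.1 hx
  have hx1 : 0 < 1 - x := by linarith
  set b : ℕ → ℝ := fun u => hhat α ((u:ℝ)+1) with hbdef
  have hbpos : ∀ u, 0 < b u := fun u => hhat_pos α hα u
  have hbsucc : ∀ u:ℕ, ((u:ℝ)+1) * b (u+1) = ((u:ℝ)+1+α) * b u := by
    intro u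
    have hc : ((u+1:ℕ):ℝ) + 1 = (u:ℝ)+1+1 := by push_cast; ring
    show ((u:ℝ)+1) * hhat α (((u+1:ℕ):ℝ)+1) = ((u:ℝ)+1+α) * hhat α ((u:ℝ)+1)
    rw [hc]; exact hhat_succ α hα u
  set ρ : ℝ := (1+|x|)/2 with hρdef
  have hxρ : |x| < ρ := by rw [hρdef]; linarith
  have hρ0 : 0 < ρ := by rw [hρdef]; positivity
  have hρ1 : ρ < 1 := by rw [hρdef]; linarith
  -- summability of the shifted derivative-bound series
  have hVsum : Summable (fun n : ℕ => (((n:ℝ)+1)+α) * (b n * ρ^n)) := by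
    have hr1 : (1+ρ)/2 < 1 := by linarith
    apply summable_of_ratio_norm_eventually_le hr1
    have ht : Tendsto (fun n : ℕ => (((n:ℝ)+1+(1+α))/((n:ℝ)+1)) * ρ) atTop (nhds (1*ρ)) :=
      (ratio_tendsto (1+α)).mul_const ρ
    rw [one_mul] at ht
    have hev := ht.eventually_le_const (show ρ < (1+ρ)/2 by linarith)
    filter_upwards [hev] with n hn
    have h1 : (0:ℝ) < (n:ℝ)+1 := by positivity
    have hVpos : ∀ m:ℕ, 0 < (((m:ℝ)+1)+α) * (b m * ρ^m) := by
      intro m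
      have : (0:ℝ) < (m:ℝ)+1+α := by positivity
      exact mul_pos this (mul_pos (hbpos m) (pow_pos hρ0 m))
    rw [Real.norm_eq_abs, Real.norm_eq_abs, abs_of_pos (hVpos _), abs_of_pos (hVpos _)]
    have key : ((((n+1:ℕ)):ℝ)+1+α) * (b (n+1) * ρ^(n+1))
        = ((((n:ℝ)+1+(1+α))/((n:ℝ)+1)) * ρ) * ((((n:ℝ)+1)+α) * (b n * ρ^n)) := by
      have h2 := hbsucc n
      push_cast
      rw [div_mul_eq_mul_div, div_mul_eq_mul_div, eq_div_iff (show ((n:ℝ)+1) ≠ 0 from h1.ne')]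
      linear_combination ((n:ℝ)+2+α) * ρ^(n+1) * h2
    rw [key]
    exact mul_le_mul_of_nonneg_right hn (hVpos n).le
  have hU'sum : Summable (fun n:ℕ => (n:ℝ) * b n * ρ^(n-1)) := by
    rw [← summable_nat_add_iff 1]
    apply hVsum.congr
    intro n
    have h2 := hbsucc n
    have : ((n+1:ℕ):ℝ) = (n:ℝ)+1 := by push_cast; ring
    simp only [this, Nat.add_sub_cancel]
    nlinarith [pow_pos hρ0 n]
  -- derivative of the sum
  have hball : ∀ y : ℝ, y ∈ Metric.ball (0:ℝ) ρ → |y| < ρ := by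
    intro y hy
    simpa [Real.dist_eq] using Metric.mem_ball.1 hy
  have hbound : ∀ (n:ℕ) (y:ℝ), y ∈ Metric.ball (0:ℝ) ρ →
      ‖b n * ((n:ℝ) * y^(n-1))‖ ≤ (n:ℝ) * b n * ρ^(n-1) := by
    intro n y hy
    have hyρ := hball y hy
    rw [norm_mul, norm_mul, norm_pow, Real.norm_eq_abs, Real.norm_eq_abs, Real.norm_eq_abs,
      abs_of_pos (hbpos n), Nat.abs_cast]
    have : |y|^(n-1) ≤ ρ^(n-1) := pow_le_pow_left₀ (abs_nonneg y) hyρ.le _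
    calc b n * ((n:ℝ) * |y|^(n-1)) ≤ b n * ((n:ℝ) * ρ^(n-1)) := by
          apply mul_le_mul_of_nonneg_left _ (hbpos n).le
          exact mul_le_mul_of_nonneg_left this (Nat.cast_nonneg n)
      _ = (n:ℝ) * b n * ρ^(n-1) := by ring
  have hsum0 : Summable (fun n => b n * (0:ℝ)^n) :=
    summable_binom α hα (by simp : |(0:ℝ)| < 1)
  have hF : ∀ y ∈ Metric.ball (0:ℝ) ρ, HasDerivAt (fun z:ℝ => ∑' n, b n * z^n)
      (∑' n, b n * ((n:ℝ) * y^(n-1))) y := by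
    intro y hy
    exact hasDerivAt_tsum_of_isPreconnected hU'sum Metric.isOpen_ball
      (convex_ball _ _).isPreconnected
      (fun n y _ => ((hasDerivAt_pow n y).const_mul (b n)))
      hbound (Metric.mem_ball_self hρ0) hsum0 hy
  -- the ODE
  have hODE : ∀ y ∈ Metric.ball (0:ℝ) ρ,
      (1-y) * (∑' n, b n * ((n:ℝ) * y^(n-1))) = (α+1) * (∑' n, b n * y^n) := by
    intro y hy
    have hy1 : |y| < 1 := lt_trans (hball y hy) hρ1
    have S1 : Summable (fun n => b n * y^n) := summable_binom α hα hy1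
    have SD : Summable (fun n => b n * ((n:ℝ) * y^(n-1))) :=
      Summable.of_norm_bounded hU'sum (fun n => hbound n y hy)
    have Sp : Summable (fun n : ℕ => (((n:ℝ)+1)+α) * (b n * y^n)) := by
      have := (summable_nat_add_iff 1).2 SD
      apply this.congr
      intro n
      have h2 := hbsucc n
      have hc : ((n+1:ℕ):ℝ) = (n:ℝ)+1 := by push_cast; ring
      simp only [hc, Nat.add_sub_cancel]
      linear_combination y^n * h2
    have hD1 : (∑' n, b n * ((n:ℝ) * y^(n-1))) = ∑' n : ℕ, (((n:ℝ)+1)+α) * (b n * y^n) := by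
      rw [Summable.tsum_eq_zero_add SD]
      simp only [Nat.cast_zero, zero_mul, mul_zero, zero_add]
      apply tsum_congr
      intro n
      have h2 := hbsucc n
      have hc : ((n+1:ℕ):ℝ) = (n:ℝ)+1 := by push_cast; ring
      simp only [hc, Nat.add_sub_cancel]
      linear_combination y^n * h2
    have Ss : Summable (fun n : ℕ => (n:ℝ) * (b n * y^n)) := by
      apply Summable.of_norm_bounded (hU'sum.mul_right ρ)
      intro n
      rw [norm_mul, norm_mul, norm_pow, Real.norm_eq_abs, Real.norm_eq_abs, Real.norm_eq_abs,
        Nat.abs_cast, abs_of_pos (hbpos n)]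
      cases n with
      | zero => simp
      | succ m =>
        have h3 : |y|^(m+1) ≤ ρ^(m+1) := pow_le_pow_left₀ (abs_nonneg y) (hball y hy).le _
        simp only [Nat.add_sub_cancel]
        calc ((m+1:ℕ):ℝ) * (b (m+1) * |y|^(m+1)) ≤ ((m+1:ℕ):ℝ) * (b (m+1) * ρ^(m+1)) := by
              apply mul_le_mul_of_nonneg_left _ (Nat.cast_nonneg _)
              exact mul_le_mul_of_nonneg_left h3 (hbpos _).le
          _ = ((m+1:ℕ):ℝ) * b (m+1) * ρ^m * ρ := by rw [pow_succ]; ring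
    have hyD : y * (∑' n : ℕ, (((n:ℝ)+1)+α) * (b n * y^n)) = ∑' n : ℕ, (n:ℝ) * (b n * y^n) := by
      rw [← tsum_mul_left]
      conv_rhs => rw [Summable.tsum_eq_zero_add Ss]
      simp only [Nat.cast_zero, zero_mul, zero_add]
      apply tsum_congr
      intro n
      have h2 := hbsucc n
      have hc : ((n+1:ℕ):ℝ) = (n:ℝ)+1 := by push_cast; ring
      simp only [hc]
      linear_combination (-(y^(n+1))) * h2
    have hfinal : (∑' n:ℕ, (((n:ℝ)+1)+α) * (b n * y^n)) - (∑' n:ℕ, (n:ℝ) * (b n * y^n))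
        = (α+1) * (∑' n, b n * y^n) := by
      rw [← Summable.tsum_sub Sp Ss, ← tsum_mul_left]
      apply tsum_congr; intro n; ring
    rw [hD1]
    have hexp : (1-y) * (∑' n:ℕ, (((n:ℝ)+1)+α) * (b n * y^n))
        = (∑' n:ℕ, (((n:ℝ)+1)+α) * (b n * y^n)) - y * (∑' n:ℕ, (((n:ℝ)+1)+α) * (b n * y^n)) := by
      ring
    rw [hexp, hyD, hfinal]
  -- the function (1-y)^(α+1) * F y has zero derivative on the ball
  have hg : ∀ y ∈ Metric.ball (0:ℝ) ρ,
      HasDerivAt (fun w => (1-w)^(α+1) * ∑' n, b n * w^n) 0 y := by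
    intro y hy
    have hy1 : y < 1 := lt_of_le_of_lt (le_abs_self y) (lt_trans (hball y hy) hρ1)
    have h1y : 0 < 1 - y := by linarith
    have hid : HasDerivAt (fun w:ℝ => 1-w) (-1) y := by
      simpa using (hasDerivAt_id y).const_sub 1
    have hmul := (hid.rpow_const (p := α+1) (Or.inl h1y.ne')).mul (hF y hy)
    have hzero : (-1 * (α+1) * (1-y)^((α+1)-1)) * (∑' n, b n * y^n)
        + (1-y)^(α+1) * (∑' n, b n * ((n:ℝ) * y^(n-1))) = 0 := by
      have hrw1 : (α+1)-1 = α := by ring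
      have hrw : (1-y)^(α+1) = (1-y)^α * (1-y) := by
        rw [Real.rpow_add h1y, Real.rpow_one]
      rw [hrw1, hrw]
      linear_combination ((1-y)^α) * hODE y hy
    rw [hzero] at hmul
    exact hmul
  have hconst : ∀ y ∈ Metric.ball (0:ℝ) ρ,
      (1-y)^(α+1) * (∑' n, b n * y^n) = 1 := by
    intro y hy
    have h0mem : (0:ℝ) ∈ Metric.ball (0:ℝ) ρ := Metric.mem_ball_self hρ0
    have hcst := (convex_ball (0:ℝ) ρ).is_const_of_fderivWithin_eq_zero
      (f := fun w => (1-w)^(α+1) * ∑' n, b n * w^n)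
      (fun w hw => ((hg w hw).differentiableAt).differentiableWithinAt)
      (fun w hw => by
        rw [((hg w hw).hasFDerivAt.hasFDerivWithinAt).fderivWithin
          (Metric.isOpen_ball.uniqueDiffWithinAt hw)]
        ext
        simp) hy h0mem
    have hcst2 : (1-y)^(α+1) * (∑' n, b n * y^n)
        = (1-(0:ℝ))^(α+1) * (∑' n, b n * (0:ℝ)^n) := hcst
    rw [hcst2]
    have hv : (∑' n, b n * (0:ℝ)^n) = b 0 := by
      rw [tsum_eq_single 0]
      · simp
      · intro n hn; simp [zero_pow hn]
    rw [sub_zero, hv, Real.one_rpow, one_mul]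
    have : b 0 = hhat α (((0:ℕ):ℝ)+1) := rfl
    rw [this]
    simpa using hhat_one α hα
  -- conclude
  have hxmem : x ∈ Metric.ball (0:ℝ) ρ := by
    simpa [Real.dist_eq] using hxρ
  have hval := hconst x hxmem
  have hne : (1-x)^(α+1) ≠ 0 := (Real.rpow_pos_of_pos hx1 _).ne'
  have hS : (∑' n, b n * x^n) = (1-x)^(-(α+1)) := by
    rw [Real.rpow_neg hx1.le]
    apply mul_left_cancel₀ hne
    rw [mul_inv_cancel₀ hne]
    exact hval
  have hsum := (summable_binom α hα hx).hasSum
  have heq : (∑' u : ℕ, hhat α ((u:ℝ)+1) * x^u) = (1-x)^(-(α+1)) := hS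
  rwa [heq] at hsum

lemma hhat_zero_left {x : ℝ} (hx : 0 < x) : hhat 0 x = 1 := by
  rw [hhat, add_zero, zero_add, Real.Gamma_one, one_mul,
    div_self (Real.Gamma_pos_of_pos hx).ne']

lemma hhat_nonneg_nat (α : ℝ) (hα : 0 ≤ α) (u : ℕ) : 0 ≤ hhat α (u:ℝ) := by
  cases u with
  | zero => simp [hhat_x0]
  | succ n =>
      have : ((n+1:ℕ):ℝ) = (n:ℝ)+1 := by push_cast; ring
      rw [this]
      exact (hhat_pos α hα n).le

/-- `∑ hhat α (u+1) y^(u+1) = y (1-y)^(-(α+1))` -/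
lemma binom_hasSum_shift (α : ℝ) (hα : 0 ≤ α) {y : ℝ} (hy : |y| < 1) :
    HasSum (fun u : ℕ => hhat α ((u:ℝ)+1) * y^(u+1)) (y * (1-y) ^ (-(α+1))) := by
  have h := (binom_hasSum α hα hy).mul_left y
  have e : (fun u:ℕ => y * (hhat α ((u:ℝ)+1) * y^u)) = fun u : ℕ => hhat α ((u:ℝ)+1) * y^(u+1) :=
    funext fun u => by ring
  rwa [e] at h

/-- `∑ hhat α u y^(u+1) = y² (1-y)^(-(α+1))` -/
lemma binom_hasSum_shift2 (α : ℝ) (hα : 0 ≤ α) {y : ℝ} (hy : |y| < 1) :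
    HasSum (fun u : ℕ => hhat α ((u:ℝ)) * y^(u+1)) (y^2 * (1-y) ^ (-(α+1))) := by
  have h := (binom_hasSum_shift α hα hy).mul_left y
  have e : (fun u:ℕ => y * (hhat α ((u:ℝ)+1) * y^(u+1)))
      = fun u => hhat α (((u+1:ℕ)):ℝ) * y^((u+1)+1) :=
    funext fun u => by push_cast; ring
  rw [e] at h
  have h2 := (hasSum_nat_add_iff (f := fun u : ℕ => hhat α ((u:ℝ)) * y^(u+1)) 1).1 h
  have hz : (∑ i ∈ Finset.range 1, hhat α ((i:ℝ)) * y^(i+1)) = 0 := by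
    simp [hhat_x0]
  rw [hz, add_zero] at h2
  have hval : y * (y * (1-y) ^ (-(α+1))) = y^2 * (1-y) ^ (-(α+1)) := by ring
  rwa [hval] at h2

lemma binom_pair_sub (α : ℝ) (hα : 0 ≤ α) {y : ℝ} (hy : |y| < 1) (h1y : 0 < 1 - y) :
    HasSum (fun u : ℕ => (hhat α ((u:ℝ)) - hhat α ((u:ℝ)+1)) * y^(u+1))
      (-y * (1-y) ^ (-α)) := by
  have h := (binom_hasSum_shift2 α hα hy).sub (binom_hasSum_shift α hα hy)
  have e : (fun u:ℕ => hhat α ((u:ℝ)) * y^(u+1) - hhat α ((u:ℝ)+1) * y^(u+1))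
      = fun u : ℕ => (hhat α ((u:ℝ)) - hhat α ((u:ℝ)+1)) * y^(u+1) := funext fun u => by ring
  rw [e] at h
  have hval : y^2 * (1-y) ^ (-(α+1)) - y * (1-y) ^ (-(α+1)) = -y * (1-y) ^ (-α) := by
    have hw : (1-y) ^ (-α) = (1-y) * (1-y) ^ (-(α+1)) := by
      rw [show -α = 1 + (-(α+1)) by ring, Real.rpow_add h1y, Real.rpow_one]
    rw [hw]; ring
  rwa [hval] at h

lemma binom_pair_add (α : ℝ) (hα : 0 ≤ α) {y : ℝ} (hy : |y| < 1) :
    HasSum (fun u : ℕ => (hhat α ((u:ℝ)) + hhat α ((u:ℝ)+1)) * y^(u+1))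
      ((y^2 + y) * (1-y) ^ (-(α+1))) := by
  have h := (binom_hasSum_shift2 α hα hy).add (binom_hasSum_shift α hα hy)
  have e : (fun u:ℕ => hhat α ((u:ℝ)) * y^(u+1) + hhat α ((u:ℝ)+1) * y^(u+1))
      = fun u : ℕ => (hhat α ((u:ℝ)) + hhat α ((u:ℝ)+1)) * y^(u+1) := funext fun u => by ring
  rw [e] at h
  have hval : y^2 * (1-y) ^ (-(α+1)) + y * (1-y) ^ (-(α+1)) = (y^2+y) * (1-y) ^ (-(α+1)) := by
    ring
  rwa [hval] at h

lemma rpow_neg_mul_succ {s : ℝ} (hs : 0 < s) (q' : ℝ) (m : ℕ) :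
    s ^ (-(q' * ((m:ℝ)+1))) = ((s^q')^(m+1))⁻¹ := by
  have h1 : ((m+1:ℕ):ℝ) = (m:ℝ)+1 := by push_cast; ring
  rw [← h1, ← Real.rpow_natCast (s^q') (m+1), ← Real.rpow_mul hs.le, Real.rpow_neg hs.le]

lemma geom_succ_hasSum {x : ℝ} (hx : |x| < 1) :
    HasSum (fun m : ℕ => x^(m+1)) (x * (1-x)⁻¹) := by
  have h := (hasSum_geometric_of_norm_lt_one (show ‖x‖ < 1 by rwa [Real.norm_eq_abs])).mul_left x
  have e : (fun m:ℕ => x * x^m) = fun m => x^(m+1) := funext fun m => by ring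
  rwa [e] at h

section dml
variable {lam q : ℝ} (hlam0 : 0 < lam) (hlam1 : lam < 1) (hq0 : 0 < q) (hq1 : q ≤ 1)

include hlam0 hlam1 hq0 hq1

lemma summable_hm (n : ℕ) :
    Summable (fun m : ℕ => hhat (q*(m:ℝ)) ((n:ℝ)+1) * (-lam)^m) := by
  apply Summable.of_norm_bounded (g := fun m : ℕ => ((m:ℝ)+1)^n * lam^m)
  · have base : Summable (fun m : ℕ => ((m:ℝ))^n * lam^m) :=
      summable_pow_mul_geometric_of_norm_lt_one n
        (by rw [Real.norm_eq_abs, abs_of_pos hlam0]; exact hlam1)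
    have shifted := (summable_nat_add_iff 1).2 base
    have := shifted.mul_left lam⁻¹
    apply this.congr
    intro m
    have hc : ((m+1:ℕ):ℝ) = (m:ℝ)+1 := by push_cast; ring
    rw [hc]
    field_simp
    ring
  · intro m
    rw [norm_mul, norm_pow, norm_neg, Real.norm_eq_abs, Real.norm_eq_abs,
      abs_of_pos hlam0, abs_of_pos (hhat_pos (q*(m:ℝ)) (by positivity) n)]
    apply mul_le_mul_of_nonneg_right _ (pow_nonneg hlam0.le m)
    calc hhat (q*(m:ℝ)) ((n:ℝ)+1) ≤ (1+q*(m:ℝ))^n := hhat_le _ (by positivity) n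
      _ ≤ ((m:ℝ)+1)^n := by
          apply pow_le_pow_left₀ (by positivity)
          nlinarith [Nat.cast_nonneg (α := ℝ) m]

lemma summable_shifted (t : ℕ) :
    Summable (fun m : ℕ => hhat (q*((m:ℝ)+1)) ((t:ℝ)) * (-lam)^(m+1)) := by
  cases t with
  | zero =>
      apply summable_zero.congr
      intro m
      simp [hhat_x0]
  | succ n =>
      have h := (summable_nat_add_iff 1).2 (summable_hm hlam0 hlam1 hq0 hq1 n)
      have hc : ((n+1:ℕ):ℝ) = (n:ℝ)+1 := by push_cast; ring
      rw [hc]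
      apply h.congr
      intro m
      have hc2 : ((m+1:ℕ):ℝ) = (m:ℝ)+1 := by push_cast; ring
      rw [hc2]

lemma dml_eq (t : ℕ) :
    dML q (-lam) t = 1 + ∑' m : ℕ, hhat (q*((m:ℝ)+1)) ((t:ℝ)) * (-lam)^(m+1) := by
  cases t with
  | zero =>
      rw [dML]
      simp [hhat_x0]
  | succ n =>
      have hs := summable_hm hlam0 hlam1 hq0 hq1 n
      rw [dML, if_neg (Nat.succ_ne_zero n)]
      have hc : ((n+1:ℕ):ℝ) = (n:ℝ)+1 := by push_cast; ring
      rw [hc, Summable.tsum_eq_zero_add hs]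
      congr 1
      · simp only [Nat.cast_zero, mul_zero, pow_zero, mul_one]
        exact hhat_zero_left (by positivity)
      · apply tsum_congr
        intro m
        have hc2 : ((m+1:ℕ):ℝ) = (m:ℝ)+1 := by push_cast; ring
        rw [hc2]

end dml

lemma key_small (lam q : ℝ) (hlam0 : 0 < lam) (hlam1 : lam < 1) (hq0 : 0 < q) (hq1 : q ≤ 1)
    (z : ℝ) (hz1 : |z| < 1) (hzq : lam < (1-|z|)^q) :
    HasSum (fun u : ℕ => (dML q (-lam) u - dML q (-lam) (u + 1)) * z ^ (u + 1))
      (lam * z / ((1 - z) ^ q + lam)) := by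
  have hz1' : z < 1 := lt_of_le_of_lt (le_abs_self z) hz1
  have h1z : 0 < 1 - z := by linarith
  have h1za : 0 < 1 - |z| := by linarith
  have hw : 0 < (1-z)^q := Real.rpow_pos_of_pos h1z q
  have hwa : 0 < (1-|z|)^q := Real.rpow_pos_of_pos h1za q
  have hwle : (1-|z|)^q ≤ (1-z)^q :=
    Real.rpow_le_rpow h1za.le (by linarith [le_abs_self z]) hq0.le
  have hαm : ∀ m:ℕ, (0:ℝ) ≤ q*((m:ℝ)+1) := fun m => by positivity
  set e : ℕ×ℕ → ℝ := fun p => (-lam)^(p.1+1) *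
    ((hhat (q*((p.1:ℝ)+1)) ((p.2:ℝ)) - hhat (q*((p.1:ℝ)+1)) ((p.2:ℝ)+1)) * z^(p.2+1))
    with hedef
  have fiber1 : ∀ m:ℕ, HasSum (fun u:ℕ => e (m,u))
      ((-lam)^(m+1) * (-z * (1-z)^(-(q*((m:ℝ)+1))))) := by
    intro m
    have h := (binom_pair_sub (q*((m:ℝ)+1)) (hαm m) hz1 h1z).mul_left ((-lam)^(m+1))
    have e1 : (fun u:ℕ => (-lam)^(m+1) *
        ((hhat (q*((m:ℝ)+1)) ((u:ℝ)) - hhat (q*((m:ℝ)+1)) ((u:ℝ)+1)) * z^(u+1)))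
        = fun u:ℕ => e (m,u) := by
      funext u; simp only [hedef]
    rwa [e1] at h
  set x : ℝ := -lam / ((1-z)^q) with hxdef
  have hxabs : |x| < 1 := by
    rw [hxdef, abs_div, abs_neg, abs_of_pos hlam0, abs_of_pos hw, div_lt_one hw]
    exact lt_of_lt_of_le hzq hwle
  have hv : ∀ m:ℕ, (-lam)^(m+1) * (-z * (1-z)^(-(q*((m:ℝ)+1)))) = -z * x^(m+1) := by
    intro m
    rw [hxdef, div_pow, rpow_neg_mul_succ h1z q m]
    have h1 : ((1-z)^q)^(m+1) ≠ 0 := by positivity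
    field_simp
  have hsumv : HasSum (fun m:ℕ => (-lam)^(m+1) * (-z * (1-z)^(-(q*((m:ℝ)+1)))))
      (lam * z / ((1-z)^q + lam)) := by
    have h := (geom_succ_hasSum hxabs).mul_left (-z)
    have e2 : (fun m:ℕ => -z * x^(m+1))
        = fun m:ℕ => (-lam)^(m+1) * (-z * (1-z)^(-(q*((m:ℝ)+1)))) :=
      funext fun m => (hv m).symm
    rw [e2] at h
    have hval : -z * (x * (1-x)⁻¹) = lam * z / ((1-z)^q + lam) := by
      rw [hxdef]
      have hden : (0:ℝ) < (1-z)^q + lam := by positivity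
      rw [show (1:ℝ) - (-lam / ((1-z)^q)) = ((1-z)^q + lam) / ((1-z)^q) by field_simp; ring,
        inv_div]
      field_simp
    rwa [hval] at h
  -- summability of e
  have hzz : |(|z|)| < 1 := by rwa [abs_abs]
  have hE : ∀ m:ℕ, HasSum (fun u:ℕ => lam^(m+1) *
      ((hhat (q*((m:ℝ)+1)) ((u:ℝ)) + hhat (q*((m:ℝ)+1)) ((u:ℝ)+1)) * |z|^(u+1)))
      (lam^(m+1) * ((|z|^2 + |z|) * (1-|z|)^(-(q*((m:ℝ)+1)+1)))) :=
    fun m => (binom_pair_add _ (hαm m) hzz).mul_left _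
  have hEsum : Summable (fun p : ℕ×ℕ => lam^(p.1+1) *
      ((hhat (q*((p.1:ℝ)+1)) ((p.2:ℝ)) + hhat (q*((p.1:ℝ)+1)) ((p.2:ℝ)+1)) * |z|^(p.2+1))) := by
    rw [summable_prod_of_nonneg]
    constructor
    · intro m; exact (hE m).summable
    · have hxa : |lam / (1-|z|)^q| < 1 := by
        rw [abs_div, abs_of_pos hlam0, abs_of_pos hwa, div_lt_one hwa]; exact hzq
      have hgeo := ((geom_succ_hasSum hxa).mul_left ((|z|^2+|z|) * (1-|z|)⁻¹)).summable
      apply hgeo.congr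
      intro m
      rw [(hE m).tsum_eq]
      rw [show -(q*((m:ℝ)+1)+1) = -(q*((m:ℝ)+1)) + (-1) by ring, Real.rpow_add h1za,
        Real.rpow_neg_one, rpow_neg_mul_succ h1za q m, div_pow]
      have h1 : ((1-|z|)^q)^(m+1) ≠ 0 := by positivity
      have h2 : (1-|z|) ≠ 0 := h1za.ne'
      field_simp
    · intro p
      apply mul_nonneg (pow_nonneg hlam0.le _)
      apply mul_nonneg
      · exact add_nonneg (hhat_nonneg_nat _ (hαm _) _) (hhat_pos _ (hαm _) _).le
      · exact pow_nonneg (abs_nonneg z) _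
  have he : Summable e := by
    apply Summable.of_norm_bounded hEsum
    intro p
    simp only [hedef]
    rw [norm_mul, norm_mul, norm_pow, norm_pow, norm_neg, Real.norm_eq_abs, Real.norm_eq_abs,
      Real.norm_eq_abs, abs_of_pos hlam0]
    apply mul_le_mul_of_nonneg_left _ (pow_nonneg hlam0.le _)
    apply mul_le_mul_of_nonneg_right _ (pow_nonneg (abs_nonneg z) _)
    have hA := hhat_nonneg_nat (q*((p.1:ℝ)+1)) (hαm _) p.2
    have hB := (hhat_pos (q*((p.1:ℝ)+1)) (hαm _) p.2).le
    calc |hhat (q*((p.1:ℝ)+1)) ((p.2:ℝ)) - hhat (q*((p.1:ℝ)+1)) ((p.2:ℝ)+1)|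
        ≤ |hhat (q*((p.1:ℝ)+1)) ((p.2:ℝ))| + |hhat (q*((p.1:ℝ)+1)) ((p.2:ℝ)+1)| := by
          rw [sub_eq_add_neg]
          refine (abs_add_le _ _).trans ?_
          rw [abs_neg]
      _ = hhat (q*((p.1:ℝ)+1)) ((p.2:ℝ)) + hhat (q*((p.1:ℝ)+1)) ((p.2:ℝ)+1) := by
          rw [abs_of_nonneg hA, abs_of_nonneg hB]
  -- combine
  have hT := he.hasSum.prod_fiberwise fiber1
  have hTval : (∑' p, e p) = lam * z / ((1-z)^q + lam) := hT.unique hsumv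
  have heT : HasSum e (lam * z / ((1-z)^q + lam)) := hTval ▸ he.hasSum
  have hswap : HasSum (fun p : ℕ×ℕ => e (p.2, p.1)) (lam*z/((1-z)^q+lam)) :=
    ((Equiv.prodComm ℕ ℕ).hasSum_iff).2 heT
  have fiber2 : ∀ u:ℕ, HasSum (fun m:ℕ => e (m, u))
      ((dML q (-lam) u - dML q (-lam) (u+1)) * z^(u+1)) := by
    intro u
    have hd1 : HasSum (fun m:ℕ => hhat (q*((m:ℝ)+1)) ((u:ℝ)) * (-lam)^(m+1))
        (dML q (-lam) u - 1) := by
      have hs := (summable_shifted hlam0 hlam1 hq0 hq1 u).hasSum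
      rwa [show (∑' m:ℕ, hhat (q*((m:ℝ)+1)) ((u:ℝ)) * (-lam)^(m+1)) = dML q (-lam) u - 1 by
        rw [dml_eq hlam0 hlam1 hq0 hq1 u]; ring] at hs
    have hc : ((u+1:ℕ):ℝ) = (u:ℝ)+1 := by push_cast; ring
    have hd2 : HasSum (fun m:ℕ => hhat (q*((m:ℝ)+1)) ((u:ℝ)+1) * (-lam)^(m+1))
        (dML q (-lam) (u+1) - 1) := by
      have hs := (summable_shifted hlam0 hlam1 hq0 hq1 (u+1)).hasSum
      rw [hc] at hs
      rwa [show (∑' m:ℕ, hhat (q*((m:ℝ)+1)) ((u:ℝ)+1) * (-lam)^(m+1)) = dML q (-lam) (u+1) - 1 by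
        have h2 := dml_eq hlam0 hlam1 hq0 hq1 (u+1)
        rw [hc] at h2
        rw [h2]; ring] at hs
    have h := (hd1.sub hd2).mul_right (z^(u+1))
    have e3 : (fun m:ℕ => (hhat (q*((m:ℝ)+1)) ((u:ℝ)) * (-lam)^(m+1)
        - hhat (q*((m:ℝ)+1)) ((u:ℝ)+1) * (-lam)^(m+1)) * z^(u+1)) = fun m:ℕ => e (m,u) := by
      funext m; simp only [hedef]; ring
    rw [e3] at h
    have hval2 : dML q (-lam) u - 1 - (dML q (-lam) (u+1) - 1)
        = dML q (-lam) u - dML q (-lam) (u+1) := by ring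
    rwa [hval2] at h
  exact hswap.prod_fiberwise fiber2

lemma cpow_re_pos {ζ : ℂ} (hre : 0 < ζ.re) {q : ℝ} (hq0 : 0 < q) (hq1 : q ≤ 1) :
    0 < ((ζ) ^ (q:ℂ)).re := by
  have hζ : ζ ≠ 0 := fun h => by simp [h] at hre
  rw [Complex.cpow_def_of_ne_zero hζ, Complex.exp_re]
  apply mul_pos (Real.exp_pos _)
  apply Real.cos_pos_of_mem_Ioo
  have harg : |ζ.arg| < Real.pi/2 := Complex.abs_arg_lt_pi_div_two_iff.2 (Or.inl hre)
  have him : (Complex.log ζ * (q:ℂ)).im = ζ.arg * q := by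
    simp [Complex.mul_im, Complex.log_im]
  have habs : |ζ.arg * q| < Real.pi/2 := by
    rw [abs_mul, abs_of_pos hq0]
    calc |ζ.arg| * q ≤ |ζ.arg| * 1 := by
          apply mul_le_mul_of_nonneg_left hq1 (abs_nonneg _)
      _ < Real.pi/2 := by rw [mul_one]; exact harg
  rw [him]
  exact Set.mem_Ioo.2 (abs_lt.1 habs)

/-- The probability generating function of the discrete Mittag-Leffler waiting time:
for `|z| < 1`, `Σ_{u=1}^∞ (F_{q,−λ}(u−1) − F_{q,−λ}(u))·z^u = λz/((1−z)^q + λ)`. -/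
theorem pgf_waiting_time (lam q : ℝ) (hlam0 : 0 < lam) (hlam1 : lam < 1)
    (hq0 : 0 < q) (hq1 : q ≤ 1) (z : ℝ) (hz : |z| < 1) :
    HasSum (fun u : ℕ => (dML q (-lam) u - dML q (-lam) (u + 1)) * z ^ (u + 1))
      (lam * z / ((1 - z) ^ q + lam)) := by
  -- choice of a small radius on which the double-series argument works
  set s0 : ℝ := ((1+lam)/2) ^ (1/q) with hs0
  have hs01 : 0 < s0 := Real.rpow_pos_of_pos (by linarith) _
  have hs0lt1 : s0 < 1 := Real.rpow_lt_one (by linarith) (by linarith) (by positivity)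
  set r0 : ℝ := 1 - s0 with hr0
  have hr00 : 0 < r0 := by rw [hr0]; linarith
  have hr01 : r0 < 1 := by rw [hr0]; linarith
  have hkey : ∀ y : ℝ, |y| < r0 → lam < (1-|y|)^q := by
    intro y hy
    have h1 : s0 < 1 - |y| := by rw [hr0] at hy; linarith
    have h2 : s0^q < (1-|y|)^q := Real.rpow_lt_rpow hs01.le h1 hq0
    have h3 : s0^q = (1+lam)/2 := by
      rw [hs0, ← Real.rpow_mul (by linarith : (0:ℝ) ≤ (1+lam)/2),
        one_div_mul_cancel hq0.ne', Real.rpow_one]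
    rw [h3] at h2
    linarith
  -- coefficient sequence
  set c : ℕ → ℝ := fun n => if n = 0 then 0 else dML q (-lam) (n-1) - dML q (-lam) n with hcdef
  have hc0 : c 0 = 0 := rfl
  have hcs : ∀ u:ℕ, c (u+1) = dML q (-lam) u - dML q (-lam) (u+1) := by
    intro u; simp [hcdef]
  -- the real sum identity on the small interval
  have hreal : ∀ y : ℝ, |y| < r0 → HasSum (fun n:ℕ => c n * y^n)
      (lam * y / ((1-y)^q + lam)) := by
    intro y hy
    have h := key_small lam q hlam0 hlam1 hq0 hq1 y (lt_trans hy hr01) (hkey y hy)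
    have e : (fun u:ℕ => (dML q (-lam) u - dML q (-lam) (u + 1)) * y ^ (u + 1))
        = fun u:ℕ => c (u+1) * y^(u+1) := by
      funext u; rw [hcs u]
    rw [e] at h
    have h2 := (hasSum_nat_add_iff (f := fun n:ℕ => c n * y^n) 1).1 h
    have hzv : (∑ i ∈ Finset.range 1, c i * y^i) = 0 := by simp [hc0]
    rwa [hzv, add_zero] at h2
  -- the complex function
  set G : ℂ → ℂ := fun w => (lam:ℂ) * w / ((1-w) ^ (q:ℂ) + (lam:ℂ)) with hGdef
  have hrepos : ∀ w : ℂ, ‖w‖ < 1 → 0 < (1-w).re := by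
    intro w hw
    have h1 := Complex.re_le_norm w
    simp only [Complex.sub_re, Complex.one_re]
    linarith
  have hden : ∀ w : ℂ, ‖w‖ < 1 → ((1-w) ^ (q:ℂ) + (lam:ℂ)) ≠ 0 := by
    intro w hw
    have h2 := cpow_re_pos (hrepos w hw) hq0 hq1
    intro hzero
    have h3 : ((1-w) ^ (q:ℂ) + (lam:ℂ)).re = 0 := by rw [hzero]; simp
    rw [Complex.add_re, Complex.ofReal_re] at h3
    linarith
  have hGdiff : DifferentiableOn ℂ G (Metric.ball 0 1) := by
    intro w hw
    have hw1 : ‖w‖ < 1 := by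
      simpa [Complex.dist_eq] using Metric.mem_ball.1 hw
    have hslit : ((1:ℂ)-w) ∈ Complex.slitPlane :=
      Complex.mem_slitPlane_iff.2 (Or.inl (hrepos w hw1))
    have h1 : HasDerivAt (fun w:ℂ => 1-w) (-1) w := by
      simpa using (hasDerivAt_id w).const_sub 1
    have h2 := h1.cpow_const (c := (q:ℂ)) hslit
    have h3 : DifferentiableAt ℂ (fun w:ℂ => (1-w)^(q:ℂ) + (lam:ℂ)) w :=
      h2.differentiableAt.add_const _
    have h4 : DifferentiableAt ℂ (fun w:ℂ => (lam:ℂ) * w) w :=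
      differentiableAt_id.const_mul _
    exact (h4.div h3 (hden w hw1)).differentiableWithinAt
  have hGreal : ∀ y : ℝ, |y| < 1 → G (y:ℂ) = ((lam * y / ((1-y)^q + lam) : ℝ) : ℂ) := by
    intro y hy
    have hy1 : y < 1 := lt_of_le_of_lt (le_abs_self y) hy
    have h1y : (0:ℝ) ≤ 1 - y := by linarith
    rw [hGdef]
    have hcp : ((1:ℂ) - (y:ℂ)) ^ (q:ℂ) = (((1-y)^q : ℝ) : ℂ) := by
      rw [show (1:ℂ) - (y:ℂ) = (((1-y:ℝ)):ℂ) by push_cast; ring]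
      rw [Complex.ofReal_cpow h1y]
    show (lam:ℂ) * (y:ℂ) / (((1:ℂ)-(y:ℂ)) ^ (q:ℂ) + (lam:ℂ)) = _
    rw [hcp]
    push_cast
    ring
  -- Taylor coefficients of G
  set tc : ℕ → ℂ := fun n => (n.factorial : ℂ)⁻¹ * iteratedDeriv n G 0 with htc
  have htaylor : ∀ w : ℂ, ‖w‖ < 1 → HasSum (fun n:ℕ => w^n * tc n) (G w) := by
    intro w hw
    have hmem : w ∈ Metric.ball (0:ℂ) 1 := by
      simp [Complex.dist_eq, hw]
    have h := Complex.hasSum_taylorSeries_on_ball hGdiff hmem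
    have e : (fun n:ℕ => (n.factorial : ℂ)⁻¹ • (w - 0) ^ n • iteratedDeriv n G 0)
        = fun n:ℕ => w^n * tc n := by
      funext n
      rw [htc]
      simp only [sub_zero, smul_eq_mul]
      ring
    rwa [e] at h
  -- two power series for the restriction of G to ℝ
  set P1 : FormalMultilinearSeries ℝ ℝ ℂ :=
    fun n => ContinuousMultilinearMap.mkPiRing ℝ (Fin n) ((c n : ℂ)) with hP1
  set P2 : FormalMultilinearSeries ℝ ℝ ℂ :=
    fun n => ContinuousMultilinearMap.mkPiRing ℝ (Fin n) (tc n) with hP2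
  have hcoeff1 : ∀ n, P1.coeff n = (c n : ℂ) := by
    intro n
    simp [hP1, FormalMultilinearSeries.coeff, ContinuousMultilinearMap.mkPiRing_apply]
  have hcoeff2 : ∀ n, P2.coeff n = tc n := by
    intro n
    simp [hP2, FormalMultilinearSeries.coeff, ContinuousMultilinearMap.mkPiRing_apply]
  have hfp1 : HasFPowerSeriesAt (fun x : ℝ => G (x:ℂ)) P1 0 := by
    rw [hasFPowerSeriesAt_iff]
    filter_upwards [Metric.ball_mem_nhds (0:ℝ) hr00] with y hy
    have hy' : |y| < r0 := by simpa [Real.dist_eq] using Metric.mem_ball.1 hy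
    have h := (Complex.hasSum_ofReal).2 (hreal y hy')
    have e : (fun n:ℕ => ((c n * y^n : ℝ) : ℂ)) = fun n:ℕ => y ^ n • P1.coeff n := by
      funext n
      rw [hcoeff1, Complex.real_smul]
      push_cast
      ring
    rw [e] at h
    rw [zero_add, hGreal y (lt_trans hy' hr01)]
    exact h
  have hfp2 : HasFPowerSeriesAt (fun x : ℝ => G (x:ℂ)) P2 0 := by
    rw [hasFPowerSeriesAt_iff]
    filter_upwards [Metric.ball_mem_nhds (0:ℝ) one_pos] with y hy
    have hy' : |y| < 1 := by simpa [Real.dist_eq] using Metric.mem_ball.1 hy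
    have h := htaylor (y:ℂ) (by rwa [Complex.norm_real, Real.norm_eq_abs])
    have e : (fun n:ℕ => ((y:ℂ))^n * tc n) = fun n:ℕ => y ^ n • P2.coeff n := by
      funext n
      rw [hcoeff2, Complex.real_smul]
      push_cast
      ring
    rw [e] at h
    rwa [zero_add]
  have hP12 : P1 = P2 := hfp1.eq_formalMultilinearSeries hfp2
  have hceq : ∀ n, (c n : ℂ) = tc n := by
    intro n
    rw [← hcoeff1, ← hcoeff2, hP12]
  -- conclude at z
  have hzb : ‖(z:ℂ)‖ < 1 := by rwa [Complex.norm_real, Real.norm_eq_abs]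
  have h := htaylor (z:ℂ) hzb
  have e : (fun n:ℕ => ((z:ℂ))^n * tc n) = fun n:ℕ => (((c n * z^n : ℝ)):ℂ) := by
    funext n
    rw [← hceq n]
    push_cast
    ring
  rw [e, hGreal z hz] at h
  have h2 := (Complex.hasSum_ofReal).1 h
  have hzv : (∑ i ∈ Finset.range 1, c i * z^i) = 0 := by simp [hc0]
  have h3 : HasSum (fun n:ℕ => c n * z^n)
      (lam * z / ((1-z)^q + lam) + ∑ i ∈ Finset.range 1, c i * z^i) := by
    rw [hzv, add_zero]; exact h2
  have h4 := (hasSum_nat_add_iff (f := fun n:ℕ => c n * z^n) 1).2 h3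
  have e4 : (fun u:ℕ => c (u+1) * z^(u+1))
      = fun u:ℕ => (dML q (-lam) u - dML q (-lam) (u + 1)) * z ^ (u + 1) := by
    funext u; rw [hcs u]
  rwa [e4] at h4
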